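/- For every s ∈ S: μ_s(Safe) = 1 if and only if there is no finite sequence s_0 = s, s_1, …, s_m in S with s_{i+1} ∈ support(P s_i) for every i < m and s_m ∈ Acc. -/

import Mathlib

open MeasureTheory Set
open scoped ENNReal Classical

variable {S : Type*}

def IsPathMeasure [MeasurableSpace S] (P : S → PMF S) (μ : S → Measure (ℕ → S)) : Prop :=
  (∀ s, IsProbabilityMeasure (μ s)) ∧
    ∀ (s : S) (n : ℕ) (x : ℕ → S),
      μ s {ω | ∀ i ≤ n, ω i = x i} =
        (if x 0 = s then 1 else 0) * ∏ i ∈ Finset.range n, (P (x i)) (x (i + 1))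

noncomputable def Rw (Acc : Set S) (γacc rn : ℝ) (s : S) : ℝ :=
  if s ∈ Acc then (1 - γacc) * rn else 0

noncomputable def Γw (Acc : Set S) (γacc γ : ℝ) (s : S) : ℝ :=
  if s ∈ Acc then γacc else γ

noncomputable def Ret (Acc : Set S) (γacc γ rn : ℝ) (ω : ℕ → S) : ℝ :=
  ∑' t : ℕ, Rw Acc γacc rn (ω (t + 1)) * ∏ k ∈ Finset.range t, Γw Acc γacc γ (ω (k + 1))

noncomputable def Val [MeasurableSpace S] (Acc : Set S) (γacc γ rn : ℝ)
    (μ : S → Measure (ℕ → S)) (s : S) : ℝ :=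
  ∫ ω, Ret Acc γacc γ rn ω ∂ (μ s)



def Reach (P : S → PMF S) (s : S) : Set S :=
  {t | ∃ (m : ℕ) (x : ℕ → S), x 0 = s ∧
    (∀ i < m, x (i + 1) ∈ (P (x i)).support) ∧ x m = t}

lemma reach_self (P : S → PMF S) (s : S) : s ∈ Reach P s :=
  ⟨0, fun _ => s, rfl, by simp, rfl⟩

lemma reach_step (P : S → PMF S) {s t u : S} (ht : t ∈ Reach P s)
    (hu : u ∈ (P t).support) : u ∈ Reach P s := by
  obtain ⟨m, x, hx0, hstep, hxm⟩ := ht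
  refine ⟨m + 1, fun i => if i ≤ m then x i else u, by simp [hx0], ?_, by simp⟩
  intro i hi
  rcases lt_or_eq_of_le (Nat.lt_succ_iff.mp hi) with h | h
  · simpa [Nat.succ_le_of_lt h, h.le] using hstep i h
  · subst h; simpa [hxm] using hu

lemma reach_of_chain (P : S → PMF S) {s : S} (x : ℕ → S) (hx0 : x 0 = s) :
    ∀ i, (∀ j < i, (P (x j)) (x (j + 1)) ≠ 0) → x i ∈ Reach P s := by
  intro i
  induction i with
  | zero => intro _; rw [hx0]; exact reach_self P s
  | succ i ih =>
    intro h
    exact reach_step P (ih fun j hj => h j (hj.trans (Nat.lt_succ_self i)))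
      ((PMF.mem_support_iff _ _).mpr (h i (Nat.lt_succ_self i)))

set_option maxHeartbeats 1000000 in
/-- the safety event has probability one from `s` iff no finite sequence of
support-transitions starting at `s` reaches `Acc`. -/
theorem safe_ae_iff_no_reaching_path
    [Fintype S] [Nonempty S] [MeasurableSpace S] [MeasurableSingletonClass S]
    (P : S → PMF S) (Acc : Set S) (μ : S → Measure (ℕ → S))
    (hμ : IsPathMeasure P μ) (s : S) :
    μ s {ω | ∀ t, ω t ∉ Acc} = 1 ↔
      ¬ ∃ (m : ℕ) (x : ℕ → S), x 0 = s ∧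
        (∀ i < m, x (i + 1) ∈ (P (x i)).support) ∧ x m ∈ Acc := by
  haveI : IsProbabilityMeasure (μ s) := hμ.1 s
  have hSafeMeas : MeasurableSet {ω : ℕ → S | ∀ t, ω t ∉ Acc} := by
    have : {ω : ℕ → S | ∀ t, ω t ∉ Acc} = ⋂ t, (fun ω : ℕ → S => ω t) ⁻¹' Accᶜ := by
      ext ω; simp [Set.mem_iInter]
    rw [this]
    exact MeasurableSet.iInter fun t =>
      (measurable_pi_apply t) (Acc.toFinite.measurableSet.compl)
  constructor
  · -- μ Safe = 1 → no reaching path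
    rintro h1 ⟨m, x, hx0, hstep, hacc⟩
    have hcompl : μ s {ω : ℕ → S | ∀ t, ω t ∉ Acc}ᶜ = 0 :=
      (prob_compl_eq_zero_iff hSafeMeas).mpr h1
    have hsub : {ω : ℕ → S | ∀ i ≤ m, ω i = x i} ⊆ {ω : ℕ → S | ∀ t, ω t ∉ Acc}ᶜ := by
      intro ω hω hsafe
      exact hsafe m (by rw [hω m le_rfl]; exact hacc)
    have hzero : μ s {ω : ℕ → S | ∀ i ≤ m, ω i = x i} = 0 :=
      le_antisymm (le_trans (measure_mono hsub) hcompl.le) zero_le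
    rw [hμ.2 s m x, if_pos hx0, one_mul] at hzero
    exact (Finset.prod_ne_zero_iff.mpr fun i hi =>
      (PMF.mem_support_iff _ _).mp (hstep i (Finset.mem_range.mp hi))) hzero
  · -- no reaching path → μ Safe = 1
    intro hno
    have hRAcc : ∀ t ∈ Reach P s, t ∉ Acc := by
      rintro t ⟨m, x, hx0, hstep, hxm⟩ htAcc
      exact hno ⟨m, x, hx0, hstep, hxm ▸ htAcc⟩
    have hB : ∀ n : ℕ, μ s {ω : ℕ → S | ω n ∉ Reach P s} = 0 := by
      intro n
      set C : (Fin (n + 1) → S) → Set (ℕ → S) := fun v =>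
        if v ⟨n, n.lt_succ_self⟩ ∉ Reach P s then
          {ω : ℕ → S | ∀ i ≤ n, ω i = v ⟨min i n, Nat.lt_succ_of_le (min_le_right i n)⟩}
        else ∅ with hC
      have hcover : {ω : ℕ → S | ω n ∉ Reach P s} ⊆ ⋃ v, C v := by
        intro ω hω
        refine Set.mem_iUnion.mpr ⟨fun j : Fin (n + 1) => ω j.val, ?_⟩
        rw [hC]
        dsimp only
        rw [if_pos (show ω n ∉ Reach P s from hω)]
        intro i hi
        simp [min_eq_left hi]
      have hzero : ∀ v : Fin (n + 1) → S, μ s (C v) = 0 := by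
        intro v
        rw [hC]
        by_cases hv : v ⟨n, n.lt_succ_self⟩ ∉ Reach P s
        · simp only [if_pos hv]
          have hform : {ω : ℕ → S | ∀ i ≤ n,
              ω i = v ⟨min i n, Nat.lt_succ_of_le (min_le_right i n)⟩} =
              {ω : ℕ → S | ∀ i ≤ n,
              ω i = (fun i : ℕ => v ⟨min i n, Nat.lt_succ_of_le (min_le_right i n)⟩) i} := rfl
          rw [hform, hμ.2 s n (fun i : ℕ => v ⟨min i n, Nat.lt_succ_of_le (min_le_right i n)⟩)]
          by_cases h0 : v ⟨min 0 n, Nat.lt_succ_of_le (min_le_right 0 n)⟩ = s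
          · rw [if_pos h0, one_mul]
            by_contra hne
            apply hv
            have := reach_of_chain P
              (fun i : ℕ => v ⟨min i n, Nat.lt_succ_of_le (min_le_right i n)⟩) h0 n
              (fun j hj => by
                intro hz
                exact hne (Finset.prod_eq_zero (Finset.mem_range.mpr hj) hz))
            simpa using this
          · rw [if_neg h0, zero_mul]
        · simp [if_neg hv]
      exact le_antisymm
        (le_trans (measure_mono hcover) (measure_iUnion_null hzero).le) zero_le
    have hsub : {ω : ℕ → S | ∀ t, ω t ∉ Acc}ᶜ ⊆ ⋃ n, {ω : ℕ → S | ω n ∉ Reach P s} := by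
      intro ω hω
      simp only [Set.mem_compl_iff, Set.mem_setOf_eq, not_forall, not_not] at hω
      obtain ⟨t, ht⟩ := hω
      exact Set.mem_iUnion.mpr ⟨t, fun hR => hRAcc _ hR ht⟩
    have hcompl : μ s {ω : ℕ → S | ∀ t, ω t ∉ Acc}ᶜ = 0 :=
      le_antisymm (le_trans (measure_mono hsub)
        (measure_iUnion_null hB).le) zero_le
    exact (prob_compl_eq_zero_iff hSafeMeas).mp hcompl
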